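/- (Eckart–Young–Mirsky, Frobenius norm) Let G ∈ ℝ^{n×m} have SVD G = U Σ Vᵀ with singular values σ_1 ≥ ... ≥ σ_q (q = min(n,m)). For any r, the truncation G_r = U_r Σ_r V_rᵀ (keeping the top r singular values) satisfies ‖G − G_r‖_F ≤ ‖G − B‖_F for every matrix B of rank at most r, and ‖G − G_r‖_F² = Σ_{j>r} σ_j². -/

import Mathlib

open Matrix

open Finset
open scoped RealInnerProductSpace

theorem proj_min {n : ℕ} (W : Submodule ℝ (EuclideanSpace ℝ (Fin n))) (y c : EuclideanSpace ℝ (Fin n))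
    (hc : c ∈ W) :
    ‖y - (Submodule.orthogonalProjection W y : EuclideanSpace ℝ (Fin n))‖^2 ≤ ‖y - c‖^2 := by
  set p : EuclideanSpace ℝ (Fin n) := (Submodule.orthogonalProjection W y : EuclideanSpace ℝ (Fin n)) with hp
  have horth : ⟪y - p, p - c⟫ = 0 :=
    Submodule.starProjection_inner_eq_zero y _ (Submodule.sub_mem W (Submodule.coe_mem _) hc)
  have h2 : y - c = (y - p) + (p - c) := by abel
  have h1 : ‖y - c‖^2 = ‖y - p‖^2 + ‖p - c‖^2 := by
    rw [h2, norm_add_sq_real, horth]; ring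
  nlinarith [sq_nonneg ‖p - c‖]

theorem proj_pyth {n : ℕ} (W : Submodule ℝ (EuclideanSpace ℝ (Fin n))) (y : EuclideanSpace ℝ (Fin n)) :
    ‖y - (Submodule.orthogonalProjection W y : EuclideanSpace ℝ (Fin n))‖^2 = ‖y‖^2 - ‖(Submodule.orthogonalProjection W y : EuclideanSpace ℝ (Fin n))‖^2 := by
  set p : EuclideanSpace ℝ (Fin n) := (Submodule.orthogonalProjection W y : EuclideanSpace ℝ (Fin n)) with hp
  have horth : ⟪y - p, p⟫ = 0 :=
    Submodule.starProjection_inner_eq_zero y _ (Submodule.coe_mem _)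
  have h2 : y = (y - p) + p := by abel
  have h1 : ‖y‖^2 = ‖y - p‖^2 + ‖p‖^2 := by
    nth_rewrite 1 [h2]; rw [norm_add_sq_real, horth]; ring
  linarith


theorem proj_trace {n : ℕ} (W : Submodule ℝ (EuclideanSpace ℝ (Fin n))) :
    ∑ i : Fin n, ‖(Submodule.orthogonalProjection W (EuclideanSpace.single i 1) : EuclideanSpace ℝ (Fin n))‖^2
      = Module.finrank ℝ W := by
  let b := stdOrthonormalBasis ℝ W
  have step : ∀ i : Fin n,
      ‖(Submodule.orthogonalProjection W (EuclideanSpace.single i 1) : EuclideanSpace ℝ (Fin n))‖^2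
        = ∑ k, ((b k : EuclideanSpace ℝ (Fin n)) i)^2 := by
    intro i
    set v := Submodule.orthogonalProjection W (EuclideanSpace.single i (1:ℝ)) with hv
    have h1 : ‖(v : EuclideanSpace ℝ (Fin n))‖^2 = ⟪v, v⟫ := by
      rw [real_inner_self_eq_norm_sq]
      exact (congrArg (· ^ 2) (Submodule.norm_coe v)).symm
    rw [h1, ← b.sum_inner_mul_inner v v]
    congr 1; ext k
    rw [Submodule.inner_orthogonalProjection_eq_of_mem_right, Submodule.inner_orthogonalProjection_eq_of_mem_left]
    rw [EuclideanSpace.inner_single_right, EuclideanSpace.inner_single_left]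
    simp [sq]
  rw [Finset.sum_congr rfl fun i _ => step i, Finset.sum_comm]
  have : ∀ k, ∑ i : Fin n, ((b k : EuclideanSpace ℝ (Fin n)) i)^2 = 1 := by
    intro k
    have h2 : ⟪(b k : EuclideanSpace ℝ (Fin n)), (b k : EuclideanSpace ℝ (Fin n))⟫ = 1 := by
      rw [← Submodule.coe_inner, real_inner_self_eq_norm_sq, b.orthonormal.1 k]
      norm_num
    rw [← h2, PiLp.inner_apply]
    simp [sq]
  rw [Finset.sum_congr rfl fun k _ => this k]
  simp


theorem comb (r q : ℕ) (σ p : ℕ → ℝ) (hσ0 : ∀ j, 0 ≤ σ j)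
    (hσmono : ∀ j k, j ≤ k → σ k ≤ σ j)
    (hp0 : ∀ k, 0 ≤ p k) (hp1 : ∀ k, p k ≤ 1)
    (hsum : ∑ k ∈ range q, p k ≤ (r : ℝ)) :
    ∑ k ∈ Ico r q, σ k ^ 2 ≤ ∑ k ∈ range q, σ k ^ 2 * (1 - p k) := by
  rcases le_or_gt q r with hqr | hrq
  · rw [Finset.Ico_eq_empty (by omega)]
    simp only [Finset.sum_empty]
    exact Finset.sum_nonneg fun k _ => mul_nonneg (sq_nonneg _) (by linarith [hp1 k])
  · have hsplit : ∀ f : ℕ → ℝ, ∑ k ∈ range q, f k = ∑ k ∈ range r, f k + ∑ k ∈ Ico r q, f k := fun f => by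
      rw [Finset.range_eq_Ico, Finset.range_eq_Ico]
      exact (Finset.sum_Ico_consecutive f (Nat.zero_le r) hrq.le).symm
    rw [hsplit (fun k => σ k ^ 2 * (1 - p k))]
    have key : ∑ k ∈ Ico r q, σ k ^ 2 * p k ≤ ∑ k ∈ range r, σ k ^ 2 * (1 - p k) := by
      have c1 : ∑ k ∈ Ico r q, σ k ^ 2 * p k ≤ σ r ^ 2 * ∑ k ∈ Ico r q, p k := by
        rw [Finset.mul_sum]
        refine Finset.sum_le_sum fun k hk => ?_
        exact mul_le_mul_of_nonneg_right
          (pow_le_pow_left₀ (hσ0 k) (hσmono r k (Finset.mem_Ico.1 hk).1) 2) (hp0 k)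
      have c2 : ∑ k ∈ Ico r q, p k ≤ (r : ℝ) - ∑ k ∈ range r, p k := by
        have := hsplit p; linarith
      have c3 : σ r ^ 2 * ((r : ℝ) - ∑ k ∈ range r, p k) ≤ ∑ k ∈ range r, σ k ^ 2 * (1 - p k) := by
        have : σ r ^ 2 * ((r : ℝ) - ∑ k ∈ range r, p k) = ∑ k ∈ range r, σ r ^ 2 * (1 - p k) := by
          have : ((r : ℝ) - ∑ k ∈ range r, p k) = ∑ k ∈ range r, (1 - p k) := by
            rw [Finset.sum_sub_distrib, Finset.sum_const, Finset.card_range]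
            simp
          rw [this, Finset.mul_sum]
        rw [this]
        refine Finset.sum_le_sum fun k hk => ?_
        exact mul_le_mul_of_nonneg_right
          (pow_le_pow_left₀ (hσ0 r) (hσmono k r (Finset.mem_range.1 hk).le) 2)
          (by linarith [hp1 k])
      calc ∑ k ∈ Ico r q, σ k ^ 2 * p k ≤ σ r ^ 2 * ∑ k ∈ Ico r q, p k := c1
        _ ≤ σ r ^ 2 * ((r : ℝ) - ∑ k ∈ range r, p k) :=
            mul_le_mul_of_nonneg_left c2 (sq_nonneg _)
        _ ≤ ∑ k ∈ range r, σ k ^ 2 * (1 - p k) := c3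
    have expand : ∑ k ∈ Ico r q, σ k ^ 2 * (1 - p k) = ∑ k ∈ Ico r q, σ k ^ 2 - ∑ k ∈ Ico r q, σ k ^ 2 * p k := by
      rw [← Finset.sum_sub_distrib]; congr 1; ext k; ring
    linarith

theorem norm_sq_euclidean {n : ℕ} (x : EuclideanSpace ℝ (Fin n)) : ‖x‖^2 = ∑ i, (x i)^2 := by
  rw [← real_inner_self_eq_norm_sq, PiLp.inner_apply]
  simp [sq, RCLike.inner_apply]

theorem key {n m r : ℕ} (σ : ℕ → ℝ) (hσ0 : ∀ j, 0 ≤ σ j)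
    (hσmono : ∀ j k, j ≤ k → σ k ≤ σ j)
    (S : Matrix (Fin n) (Fin m) ℝ)
    (hS : ∀ i j, S i j = if (i : ℕ) = (j : ℕ) then σ (i : ℕ) else 0)
    (C : Matrix (Fin n) (Fin m) ℝ) (hC : C.rank ≤ r) :
    ∑ k ∈ Finset.Ico r (min n m), σ k ^ 2 ≤ ∑ j : Fin m, ∑ i : Fin n, (S i j - C i j) ^ 2 := by
  classical
  set E := EuclideanSpace ℝ (Fin n)
  set c : Fin m → E := fun j => (WithLp.equiv 2 (Fin n → ℝ)).symm (fun i => C i j) with hc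
  set W : Submodule ℝ E := Submodule.span ℝ (Set.range c) with hW
  have hfin : Module.finrank ℝ W = C.rank := by
    let e := (WithLp.linearEquiv 2 ℝ (Fin n → ℝ)).symm
    have h1 : Set.range c = e '' (Set.range C.col) := by rw [← Set.range_comp]; rfl
    rw [hW, h1, ← LinearEquiv.coe_coe, ← Submodule.map_span, Matrix.rank_eq_finrank_span_cols]
    exact LinearEquiv.finrank_map_eq e _
  set p : Fin n → ℝ := fun i =>
    ‖(Submodule.orthogonalProjection W (EuclideanSpace.single i 1) : E)‖^2 with hpdef
  have hp0 : ∀ i, 0 ≤ p i := fun i => sq_nonneg _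
  have hp1 : ∀ i, p i ≤ 1 := by
    intro i
    have h := proj_pyth W (EuclideanSpace.single i 1)
    have h2 : ‖(EuclideanSpace.single i (1:ℝ) : E)‖ = 1 := by
      rw [EuclideanSpace.norm_single]; norm_num
    have h3 := sq_nonneg ‖(EuclideanSpace.single i (1:ℝ) : E) - (Submodule.orthogonalProjection W (EuclideanSpace.single i 1) : E)‖
    rw [hpdef]; dsimp only
    nlinarith
  have hptr : ∑ i : Fin n, p i ≤ (r : ℝ) := by
    rw [hpdef, proj_trace W]
    exact_mod_cast (hfin ▸ hC : Module.finrank ℝ W ≤ r)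
  set pp : ℕ → ℝ := fun k => if h : k < n then p ⟨k, h⟩ else 0 with hppdef
  have hpp0 : ∀ k, 0 ≤ pp k := by
    intro k; rw [hppdef]; dsimp only; split
    · exact hp0 _
    · exact le_refl 0
  have hpp1 : ∀ k, pp k ≤ 1 := by
    intro k; rw [hppdef]; dsimp only; split
    · exact hp1 _
    · norm_num
  have hppsum : ∑ k ∈ range (min n m), pp k ≤ (r : ℝ) := by
    have h1 : ∑ k ∈ range (min n m), pp k ≤ ∑ k ∈ range n, pp k :=
      Finset.sum_le_sum_of_subset_of_nonneg
        (Finset.range_subset_range.2 (Nat.min_le_left n m)) (fun k _ _ => hpp0 k)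
    have h2 : ∑ k ∈ range n, pp k = ∑ i : Fin n, p i := by
      rw [Finset.sum_range fun k => pp k]
      refine Finset.sum_congr rfl fun i _ => ?_
      rw [hppdef]; exact dif_pos i.isLt
    linarith
  -- column bound
  set Gcol : Fin m → ℝ := fun j => ∑ i : Fin n, (S i j - C i j) ^ 2 with hGcol
  have hGnn : ∀ j, 0 ≤ Gcol j := fun j => Finset.sum_nonneg fun i _ => sq_nonneg _
  set gg : ℕ → ℝ := fun k => if h : k < m then Gcol ⟨k, h⟩ else 0 with hgg
  have hcol : ∀ k, k < min n m → σ k ^ 2 * (1 - pp k) ≤ gg k := by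
    intro k hk
    have hkn : k < n := lt_of_lt_of_le hk (Nat.min_le_left n m)
    have hkm : k < m := lt_of_lt_of_le hk (Nat.min_le_right n m)
    set i0 : Fin n := ⟨k, hkn⟩ with hi0
    set j0 : Fin m := ⟨k, hkm⟩ with hj0
    set y : E := σ k • EuclideanSpace.single i0 1 with hy
    have hyapp : ∀ i : Fin n, y i = if i = i0 then σ k else 0 := by
      intro i
      rw [hy]
      rw [PiLp.smul_apply, EuclideanSpace.single_apply]
      simp [mul_ite]
    have hvec : ∀ i : Fin n, S i j0 - C i j0 = (y - c j0) i := by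
      intro i
      have hcapp : (c j0) i = C i j0 := rfl
      rw [PiLp.sub_apply, hcapp, hyapp, hS]
      have : ((i : ℕ) = (j0 : ℕ)) ↔ i = i0 := by
        rw [hi0, hj0]
        constructor
        · intro h; exact Fin.ext h
        · intro h; rw [h]
      by_cases hii : i = i0
      · rw [if_pos hii, if_pos (this.2 hii), hii]
      · rw [if_neg hii, if_neg (fun h => hii (this.1 h))]
    have hsum1 : Gcol j0 = ‖y - c j0‖^2 := by
      rw [norm_sq_euclidean, hGcol]
      exact Finset.sum_congr rfl fun i _ => by rw [hvec i]
    have hcmem : c j0 ∈ W := Submodule.subset_span (Set.mem_range_self j0)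
    have h1 := proj_min W y (c j0) hcmem
    have h2 := proj_pyth W y
    have hnormy : ‖y‖^2 = σ k ^ 2 := by
      rw [hy, norm_smul, EuclideanSpace.norm_single, norm_one, mul_one, Real.norm_eq_abs, sq_abs]
    have hPy : ‖(Submodule.orthogonalProjection W y : E)‖^2 = σ k ^ 2 * pp k := by
      rw [hy, _root_.map_smul]
      have : ((σ k • Submodule.orthogonalProjection W (EuclideanSpace.single i0 1) : W) : E)
          = σ k • (Submodule.orthogonalProjection W (EuclideanSpace.single i0 1) : E) := rfl
      rw [this, norm_smul, Real.norm_eq_abs, mul_pow, sq_abs]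
      congr 1
      rw [hppdef]; dsimp only
      rw [dif_pos hkn]
    have hggk : gg k = Gcol j0 := by rw [hgg]; exact dif_pos hkm
    rw [hggk, hsum1]
    nlinarith
  have hfinal : ∑ k ∈ range (min n m), σ k ^ 2 * (1 - pp k) ≤ ∑ j : Fin m, Gcol j := by
    have h1 : ∑ k ∈ range (min n m), σ k ^ 2 * (1 - pp k) ≤ ∑ k ∈ range (min n m), gg k :=
      Finset.sum_le_sum fun k hk => hcol k (mem_range.1 hk)
    have h2 : ∑ k ∈ range (min n m), gg k ≤ ∑ k ∈ range m, gg k :=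
      Finset.sum_le_sum_of_subset_of_nonneg
        (Finset.range_subset_range.2 (Nat.min_le_right n m))
        (fun k _ _ => by
          rw [hgg]; dsimp only
          split
          · exact hGnn _
          · exact le_refl 0)
    have h3 : ∑ k ∈ range m, gg k = ∑ j : Fin m, Gcol j := by
      rw [Finset.sum_range fun k => gg k]
      refine Finset.sum_congr rfl fun j _ => ?_
      rw [hgg]; exact dif_pos j.isLt
    linarith
  calc ∑ k ∈ Finset.Ico r (min n m), σ k ^ 2
      ≤ ∑ k ∈ range (min n m), σ k ^ 2 * (1 - pp k) := comb r (min n m) σ pp hσ0 hσmono hpp0 hpp1 hppsum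
    _ ≤ ∑ j : Fin m, Gcol j := hfinal


theorem trace_sq {n m : ℕ} (A : Matrix (Fin n) (Fin m) ℝ) :
    Matrix.trace (Aᵀ * A) = ∑ j : Fin m, ∑ i : Fin n, (A i j) ^ 2 := by
  simp [Matrix.trace, Matrix.diag, Matrix.mul_apply, sq]

theorem conj_trace {n m : ℕ} (U : Matrix (Fin n) (Fin n) ℝ) (V : Matrix (Fin m) (Fin m) ℝ)
    (M : Matrix (Fin n) (Fin m) ℝ) (hU : Uᵀ * U = 1) (hV : Vᵀ * V = 1) :
    Matrix.trace (Mᵀ * M) = Matrix.trace ((Uᵀ * M * V)ᵀ * (Uᵀ * M * V)) := by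
  have hU' : U * Uᵀ = 1 := mul_eq_one_comm.mp hU
  have hV' : V * Vᵀ = 1 := mul_eq_one_comm.mp hV
  rw [Matrix.transpose_mul, Matrix.transpose_mul, Matrix.transpose_transpose,
    Matrix.trace_mul_comm]
  have e1 : Vᵀ * (Mᵀ * U) * (Uᵀ * M * V) = Vᵀ * (Mᵀ * (M * V)) := by
    calc Vᵀ * (Mᵀ * U) * (Uᵀ * M * V) = Vᵀ * (Mᵀ * ((U * Uᵀ) * (M * V))) := by
          simp only [Matrix.mul_assoc]
      _ = Vᵀ * (Mᵀ * (M * V)) := by rw [hU', Matrix.one_mul]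
  have e2 : Mᵀ * (M * V) * Vᵀ = Mᵀ * M := by
    calc Mᵀ * (M * V) * Vᵀ = Mᵀ * (M * (V * Vᵀ)) := by simp only [Matrix.mul_assoc]
      _ = Mᵀ * M := by rw [hV', Matrix.mul_one]
  rw [e1, Matrix.trace_mul_comm, Matrix.trace_mul_comm Vᵀ (Mᵀ * (M * V)), e2]


theorem diag_sum {n m r : ℕ} (σ : ℕ → ℝ) (D : Matrix (Fin n) (Fin m) ℝ)
    (hD : ∀ i j, D i j = if (i : ℕ) = (j : ℕ) ∧ r ≤ (i : ℕ) then σ (i : ℕ) else 0) :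
    ∑ j : Fin m, ∑ i : Fin n, (D i j) ^ 2 = ∑ k ∈ Finset.Ico r (min n m), σ k ^ 2 := by
  classical
  rw [Finset.sum_comm]
  set f : ℕ → ℝ := fun k => if k < m ∧ r ≤ k then σ k ^ 2 else 0 with hf
  have inner : ∀ i : Fin n, ∑ j : Fin m, (D i j) ^ 2 = f (i : ℕ) := by
    intro i
    by_cases him : (i : ℕ) < m
    · rw [Finset.sum_eq_single (⟨(i : ℕ), him⟩ : Fin m)]
      · rw [hD, hf]
        by_cases hr : r ≤ (i : ℕ)
        · simp [hr, him]
        · simp [hr, him]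
      · intro b _ hb
        rw [hD]
        have : ¬ ((i : ℕ) = (b : ℕ) ∧ r ≤ (i : ℕ)) := by
          rintro ⟨h1, -⟩
          exact hb (Fin.ext h1.symm)
        rw [if_neg this]
        norm_num
      · intro h; exact absurd (Finset.mem_univ _) h
    · have : ∀ j : Fin m, (D i j) ^ 2 = 0 := by
        intro j
        rw [hD, if_neg]
        · norm_num
        · rintro ⟨h1, -⟩
          exact him (h1 ▸ j.isLt)
      rw [Finset.sum_congr rfl fun j _ => this j, hf]
      simp [him]
  rw [Finset.sum_congr rfl fun i _ => inner i, Fin.sum_univ_eq_sum_range (fun k => f k)]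
  rw [hf, ← Finset.sum_filter]
  apply Finset.sum_congr _ fun k _ => rfl
  ext k
  simp only [Finset.mem_filter, Finset.mem_range, Finset.mem_Ico]
  omega

/-- Eckart–Young–Mirsky theorem in the Frobenius norm: the rank-`r` SVD truncation
`G_r = U Σ_r Vᵀ` is a best rank-`r` approximation of `G`, and the squared error is
the sum of the squares of the discarded singular values. -/
theorem eckart_young_frobenius (n m r : ℕ) (G : Matrix (Fin n) (Fin m) ℝ)
    (U : Matrix (Fin n) (Fin n) ℝ) (V : Matrix (Fin m) (Fin m) ℝ) (σ : ℕ → ℝ)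
    (hU : Uᵀ * U = 1) (hV : Vᵀ * V = 1)
    (hσ0 : ∀ j, 0 ≤ σ j) (hσmono : ∀ j k, j ≤ k → σ k ≤ σ j)
    (hσq : ∀ j, min n m ≤ j → σ j = 0)
    (S : Matrix (Fin n) (Fin m) ℝ)
    (hS : ∀ i j, S i j = if (i : ℕ) = (j : ℕ) then σ (i : ℕ) else 0)
    (hG : G = U * S * Vᵀ)
    (Sr : Matrix (Fin n) (Fin m) ℝ)
    (hSr : ∀ i j, Sr i j = if (i : ℕ) = (j : ℕ) ∧ (i : ℕ) < r then σ (i : ℕ) else 0) :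
    (∀ B : Matrix (Fin n) (Fin m) ℝ, B.rank ≤ r →
      Real.sqrt (Matrix.trace ((G - U * Sr * Vᵀ)ᵀ * (G - U * Sr * Vᵀ))) ≤
        Real.sqrt (Matrix.trace ((G - B)ᵀ * (G - B)))) ∧
    Matrix.trace ((G - U * Sr * Vᵀ)ᵀ * (G - U * Sr * Vᵀ)) =
      ∑ j ∈ Finset.Ico r (min n m), σ j ^ 2 := by
  classical
  have hU' : U * Uᵀ = 1 := mul_eq_one_comm.mp hU
  have hV' : V * Vᵀ = 1 := mul_eq_one_comm.mp hV
  have hsandwich : ∀ T : Matrix (Fin n) (Fin m) ℝ, Uᵀ * (U * T * Vᵀ) * V = T := by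
    intro T
    simp only [← Matrix.mul_assoc]
    rw [hU, Matrix.one_mul, Matrix.mul_assoc, hV, Matrix.mul_one]
  have hUGV : Uᵀ * G * V = S := by rw [hG, hsandwich]
  have hD : ∀ X : Matrix (Fin n) (Fin m) ℝ, Uᵀ * (G - X) * V = S - Uᵀ * X * V := by
    intro X
    rw [Matrix.mul_sub, Matrix.sub_mul, hUGV]
  have h_tr : Matrix.trace ((G - U * Sr * Vᵀ)ᵀ * (G - U * Sr * Vᵀ))
      = ∑ k ∈ Finset.Ico r (min n m), σ k ^ 2 := by
    rw [conj_trace U V (G - U * Sr * Vᵀ) hU hV, hD, hsandwich, trace_sq]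
    refine diag_sum σ (S - Sr) fun i j => ?_
    rw [Matrix.sub_apply, hS, hSr]
    by_cases h1 : (i : ℕ) = (j : ℕ)
    · by_cases h2 : (i : ℕ) < r
      · rw [if_pos h1, if_pos ⟨h1, h2⟩, if_neg (by omega), sub_self]
      · rw [if_pos h1, if_neg (by tauto), if_pos ⟨h1, by omega⟩, sub_zero]
    · rw [if_neg h1, if_neg (by tauto), if_neg (by tauto), sub_zero]
  refine ⟨fun B hB => ?_, h_tr⟩
  apply Real.sqrt_le_sqrt
  rw [h_tr, conj_trace U V (G - B) hU hV, hD B, trace_sq]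
  have hrank : (Uᵀ * B * V).rank ≤ r := by
    have hdV : IsUnit V.det :=
      IsUnit.of_mul_eq_one _ (by rw [← Matrix.det_mul, hV', Matrix.det_one])
    have hdU : IsUnit Uᵀ.det :=
      IsUnit.of_mul_eq_one _ (by rw [← Matrix.det_mul, hU, Matrix.det_one])
    calc (Uᵀ * B * V).rank = (Uᵀ * B).rank := Matrix.rank_mul_eq_left_of_isUnit_det V (Uᵀ * B) hdV
      _ = B.rank := Matrix.rank_mul_eq_right_of_isUnit_det Uᵀ B hdU
      _ ≤ r := hB
  exact key σ hσ0 hσmono S hS (Uᵀ * B * V) hrank
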